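/- For positive integers m, n, the number of spanning trees of K_{m,n} with all degrees odd equals the double sum, over tuples (k_1,...,k_m) of even naturals summing to n-1 and tuples (l_1,...,l_n) of even naturals summing to m-1, of (m-1)!(n-1)!/(∏ k_i! ∏ l_j!). -/

import Mathlib

open Finset SimpleGraph

variable {V : Type*}

noncomputable def fdeg (T : SimpleGraph V) (v : V) : ℕ := Nat.card {w // T.Adj v w}

lemma fdeg_eq_ncard (T : SimpleGraph V) (v : V) : fdeg T v = (T.neighborSet v).ncard :=
  Nat.card_coe_set_eq _

lemma fdeg_eq_zero_iff [Finite V] {T : SimpleGraph V} {v : V} :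
    fdeg T v = 0 ↔ ∀ w, ¬ T.Adj v w := by
  rw [fdeg_eq_ncard, Set.ncard_eq_zero (Set.toFinite _), Set.eq_empty_iff_forall_notMem]
  rfl

lemma fdeg_eq_one_iff [Finite V] {T : SimpleGraph V} {v : V} :
    fdeg T v = 1 ↔ ∃ y, T.Adj v y ∧ ∀ w, T.Adj v w → w = y := by
  rw [fdeg_eq_ncard, Set.ncard_eq_one]
  constructor
  · rintro ⟨y, hy⟩
    refine ⟨y, ?_, fun w hw => ?_⟩
    · have : y ∈ T.neighborSet v := hy ▸ rfl
      exact this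
    · have : w ∈ T.neighborSet v := hw
      rwa [hy] at this
  · rintro ⟨y, h1, h2⟩
    exact ⟨y, Set.eq_singleton_iff_unique_mem.mpr ⟨h1, fun w hw => h2 w hw⟩⟩

lemma neighborSet_deleteEdge_self {T : SimpleGraph V} {x y : V} :
    (T.deleteEdges {s(x,y)}).neighborSet x = T.neighborSet x \ {y} := by
  ext w
  simp only [mem_neighborSet, deleteEdges_adj, Set.mem_singleton_iff, Set.mem_diff, Sym2.eq_iff]
  constructor
  · rintro ⟨h1, h2⟩
    refine ⟨h1, fun hw => h2 ?_⟩; tauto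
  · rintro ⟨h1, h2⟩
    refine ⟨h1, ?_⟩
    rintro (⟨-, rfl⟩ | ⟨h3, rfl⟩)
    · exact h2 rfl
    · exact T.irrefl h1

lemma neighborSet_deleteEdge_other {T : SimpleGraph V} {x y v : V} (hvx : v ≠ x) (hvy : v ≠ y) :
    (T.deleteEdges {s(x,y)}).neighborSet v = T.neighborSet v := by
  ext w
  simp only [mem_neighborSet, deleteEdges_adj, Set.mem_singleton_iff, Sym2.eq_iff]
  refine ⟨fun h => h.1, fun h => ⟨h, ?_⟩⟩
  rintro (⟨rfl, rfl⟩ | ⟨rfl, rfl⟩)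
  · exact hvx rfl
  · exact hvy rfl

noncomputable def addE (T : SimpleGraph V) (x y : V) : SimpleGraph V :=
  T ⊔ SimpleGraph.fromEdgeSet {s(x,y)}

lemma addE_adj {T : SimpleGraph V} {x y a b : V} (hxy : x ≠ y) :
    (addE T x y).Adj a b ↔ T.Adj a b ∨ (a = x ∧ b = y) ∨ (a = y ∧ b = x) := by
  simp only [addE, sup_adj, fromEdgeSet_adj, Set.mem_singleton_iff, Sym2.eq_iff]
  constructor
  · rintro (h | ⟨(⟨rfl,rfl⟩|⟨rfl,rfl⟩), hne⟩)
    · exact Or.inl h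
    · exact Or.inr (Or.inl ⟨rfl, rfl⟩)
    · exact Or.inr (Or.inr ⟨rfl, rfl⟩)
  · rintro (h | ⟨rfl, rfl⟩ | ⟨rfl, rfl⟩)
    · exact Or.inl h
    · exact Or.inr ⟨Or.inl ⟨rfl, rfl⟩, hxy⟩
    · exact Or.inr ⟨Or.inr ⟨rfl, rfl⟩, hxy.symm⟩

lemma neighborSet_addE_self {T : SimpleGraph V} {x y : V} (hxy : x ≠ y) :
    (addE T x y).neighborSet x = insert y (T.neighborSet x) := by
  ext w
  simp only [mem_neighborSet, addE_adj hxy, Set.mem_insert_iff]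
  constructor
  · rintro (h | ⟨-, rfl⟩ | ⟨hc, -⟩)
    · exact Or.inr h
    · exact Or.inl rfl
    · exact absurd hc hxy
  · rintro (rfl | h)
    · tauto
    · exact Or.inl h

lemma neighborSet_addE_other {T : SimpleGraph V} {x y v : V} (hxy : x ≠ y)
    (hvx : v ≠ x) (hvy : v ≠ y) :
    (addE T x y).neighborSet v = T.neighborSet v := by
  ext w
  simp only [mem_neighborSet, addE_adj hxy]
  refine ⟨fun h => ?_, fun h => Or.inl h⟩
  rcases h with h | ⟨rfl, -⟩ | ⟨rfl, -⟩
  · exact h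
  · exact absurd rfl hvx
  · exact absurd rfl hvy

lemma isAcyclic_mono {T T' : SimpleGraph V} (h : T' ≤ T) (hT : T.IsAcyclic) : T'.IsAcyclic := by
  intro v c hc
  exact hT (c.mapLe h) (hc.mapLe _)
variable {T : SimpleGraph V} [DecidableEq V]
lemma path_avoid_leaf {x y : V} (hxy : ∀ w, T.Adj x w → w = y) :
    ∀ {u v : V} (p : T.Walk u v), p.IsPath → u ≠ x → v ≠ x → x ∉ p.support := by
  intro u v p
  induction p with
  | nil => intro _ hu _; simpa using hu.symm
  | @cons u w v h q ih =>
    intro hp hu hv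
    rcases eq_or_ne w x with rfl | hwx
    · have huy : u = y := hxy u h.symm
      cases q with
      | nil => exact absurd rfl hv
      | @cons _ w' _ h' q' =>
        have hw'y : w' = y := hxy w' h'
        exfalso
        have hnd := hp.support_nodup
        simp only [SimpleGraph.Walk.support_cons, List.nodup_cons] at hnd
        refine hnd.1 (List.mem_cons_of_mem _ ?_)
        subst huy; rw [← hw'y]; exact q'.start_mem_support
    · have : x ∉ q.support := ih hp.of_cons hwx hv
      simp only [SimpleGraph.Walk.support_cons, List.mem_cons]
      rintro (rfl | hx)
      · exact hu rfl
      · exact this hx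

lemma cycle_two_neighbors {x v : V} {c : T.Walk v v} (hc : c.IsCycle)
    (hx : x ∈ c.support) : ∃ a b, a ≠ b ∧ T.Adj x a ∧ T.Adj x b := by
  have hc' : (c.rotate x hx).IsCycle := hc.rotate hx
  cases hcc : c.rotate x hx with
  | nil => rw [hcc] at hc'; exact absurd rfl hc'.ne_nil
  | @cons _ w _ h q =>
    rw [hcc] at hc'
    cases hq : q.reverse with
    | nil =>
      have := congrArg SimpleGraph.Walk.length hq
      simp only [SimpleGraph.Walk.length_reverse, SimpleGraph.Walk.length_nil] at this
      have h3 := hc'.three_le_length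
      simp [SimpleGraph.Walk.length_cons, this] at h3
    | @cons _ b _ h' q'' =>
      refine ⟨w, b, ?_, h, h'⟩
      rintro rfl
      have hmem : s(x, w) ∈ q.edges := by
        have : s(x, w) ∈ q.reverse.edges := by
          rw [hq]; exact List.mem_cons_self
        rwa [SimpleGraph.Walk.edges_reverse, List.mem_reverse] at this
      have hnd := hc'.edges_nodup
      rw [SimpleGraph.Walk.edges_cons, List.nodup_cons] at hnd
      exact hnd.1 hmem
lemma walk_leaf_pair {T : SimpleGraph V} {x y : V}
    (hx : ∀ w, T.Adj x w → w = y) (hy : ∀ w, T.Adj y w → w = x) :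
    ∀ (n : ℕ) {u : V} (p : T.Walk x u), p.length ≤ n → u = x ∨ u = y := by
  have key : ∀ (n : ℕ),
      (∀ {u : V} (p : T.Walk x u), p.length ≤ n → u = x ∨ u = y) ∧
      (∀ {u : V} (p : T.Walk y u), p.length ≤ n → u = y ∨ u = x) := by
    intro n
    induction n with
    | zero =>
      constructor <;> intro u p hp
      · cases p with
        | nil => exact Or.inl rfl
        | cons h q => simp at hp
      · cases p with
        | nil => exact Or.inl rfl
        | cons h q => simp at hp
    | succ n ih =>
      constructor <;> intro u p hp
      · cases p with
        | nil => exact Or.inl rfl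
        | cons h q =>
          have := hx _ h
          subst this
          rcases ih.2 q (Nat.le_of_succ_le_succ (by simpa using hp)) with h1 | h1
          · exact Or.inr h1
          · exact Or.inl h1
      · cases p with
        | nil => exact Or.inl rfl
        | cons h q =>
          have := hy _ h
          subst this
          rcases ih.1 q (Nat.le_of_succ_le_succ (by simpa using hp)) with h1 | h1
          · exact Or.inr h1
          · exact Or.inl h1
  intro n u p hp
  exact (key n).1 p hp
def Fib (A B : Finset V) (k : V → ℕ) : Set (SimpleGraph V) :=
  {T | (∀ a b, T.Adj a b → (a ∈ A ∧ b ∈ B) ∨ (a ∈ B ∧ b ∈ A)) ∧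
       T.IsAcyclic ∧
       (∀ v ∈ A ∪ B, ∀ w ∈ A ∪ B, T.Reachable v w) ∧
       (∀ v ∈ A ∪ B, fdeg T v = k v + 1) ∧
       (∀ v ∉ A ∪ B, fdeg T v = 0)}

lemma Fib_comm (A B : Finset V) (k : V → ℕ) : Fib A B k = Fib B A k := by
  unfold Fib
  ext T
  rw [Set.mem_setOf_eq, Set.mem_setOf_eq, Finset.union_comm B A]
  constructor <;> rintro ⟨h1, h2, h3, h4, h5⟩ <;>
    exact ⟨fun a b h => (h1 a b h).symm, h2, h3, h4, h5⟩

lemma Fib_finite [Finite V] (A B : Finset V) (k : V → ℕ) : (Fib A B k).Finite := by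
  have : Finite (SimpleGraph V) := by
    have : Fintype V := Fintype.ofFinite V
    infer_instance
  exact Set.toFinite _
set_option maxHeartbeats 1000000 in
lemma fwd_mem [Finite V] {A B : Finset V} {k : V → ℕ} {x : V}
    (hdisj : Disjoint A B) (hx : x ∈ A) (hkx : k x = 0) (hA2 : 2 ≤ A.card)
    {T : SimpleGraph V} (hT : T ∈ Fib A B k) :
    ∃ y, y ∈ B ∧ 1 ≤ k y ∧ T.Adj x y ∧ (∀ w, T.Adj x w → w = y) ∧
      T.deleteEdges {s(x,y)} ∈ Fib (A.erase x) B (Function.update k y (k y - 1)) := by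
  obtain ⟨hE, hAc, hR, hD, hD0⟩ := hT
  have hdx : fdeg T x = 1 := by
    rw [hD x (Finset.mem_union_left _ hx), hkx]
  obtain ⟨y, hxy, huniq⟩ := fdeg_eq_one_iff.mp hdx
  have hxB : x ∉ B := Finset.disjoint_left.mp hdisj hx
  have hyB : y ∈ B := by
    rcases hE x y hxy with ⟨-, h⟩ | ⟨h, -⟩
    · exact h
    · exact absurd h hxB
  have hyA : y ∉ A := Finset.disjoint_right.mp hdisj hyB
  have hxyne : x ≠ y := T.ne_of_adj hxy
  -- k y ≥ 1
  have hky : 1 ≤ k y := by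
    by_contra hc
    have hky0 : k y = 0 := by omega
    have hdy : fdeg T y = 1 := by rw [hD y (Finset.mem_union_right _ hyB), hky0]
    obtain ⟨y', hyy', huniq'⟩ := fdeg_eq_one_iff.mp hdy
    have hy'x : ∀ w, T.Adj y w → w = x := by
      intro w hw
      rw [huniq' w hw, huniq' x hxy.symm]
    obtain ⟨a, ha, b, hb, hab⟩ := Finset.one_lt_card.mp hA2
    obtain ⟨x', hx'A, hx'x⟩ : ∃ x', x' ∈ A ∧ x' ≠ x := by
      rcases eq_or_ne a x with rfl | h
      · exact ⟨b, hb, fun hc => hab hc.symm⟩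
      · exact ⟨a, ha, h⟩
    have hreach := hR x (Finset.mem_union_left _ hx) x' (Finset.mem_union_left _ hx'A)
    obtain ⟨p⟩ := hreach
    rcases walk_leaf_pair huniq hy'x p.length p le_rfl with h | h
    · exact hx'x h
    · exact hyA (h ▸ hx'A)
  -- membership of the deleted graph
  refine ⟨y, hyB, hky, hxy, huniq, ?_, ?_, ?_, ?_, ?_⟩
  · -- edge location
    intro a b hab
    have hab' : T.Adj a b := (T.deleteEdges_le _ hab)
    have hax : a ≠ x := by
      rintro rfl
      have := huniq b hab'
      subst this
      rw [deleteEdges_adj] at hab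
      exact hab.2 rfl
    have hbx : b ≠ x := by
      rintro rfl
      have := huniq a hab'.symm
      subst this
      rw [deleteEdges_adj] at hab
      exact hab.2 (Sym2.eq_swap ▸ rfl)
    rcases hE a b hab' with ⟨h1, h2⟩ | ⟨h1, h2⟩
    · exact Or.inl ⟨Finset.mem_erase.mpr ⟨hax, h1⟩, h2⟩
    · exact Or.inr ⟨h1, Finset.mem_erase.mpr ⟨hbx, h2⟩⟩
  · exact isAcyclic_mono (T.deleteEdges_le _) hAc
  · -- reachability
    intro u hu v hv
    have hux : u ≠ x := by
      rcases Finset.mem_union.mp hu with h | h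
      · exact (Finset.mem_erase.mp h).1
      · rintro rfl; exact hxB h
    have hvx : v ≠ x := by
      rcases Finset.mem_union.mp hv with h | h
      · exact (Finset.mem_erase.mp h).1
      · rintro rfl; exact hxB h
    have hu' : u ∈ A ∪ B := by
      rcases Finset.mem_union.mp hu with h | h
      · exact Finset.mem_union_left _ (Finset.mem_of_mem_erase h)
      · exact Finset.mem_union_right _ h
    have hv' : v ∈ A ∪ B := by
      rcases Finset.mem_union.mp hv with h | h
      · exact Finset.mem_union_left _ (Finset.mem_of_mem_erase h)
      · exact Finset.mem_union_right _ h
    obtain ⟨p0⟩ := hR u hu' v hv'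
    have hpath := (p0.toPath : T.Path u v)
    have hxsup : x ∉ hpath.val.support :=
      path_avoid_leaf huniq hpath.val hpath.2 hux hvx
    refine ⟨hpath.val.toDeleteEdges {s(x,y)} ?_⟩
    intro e he hes
    rw [Set.mem_singleton_iff] at hes
    subst hes
    exact hxsup (hpath.val.fst_mem_support_of_mem_edges he)
  · -- degrees on new support
    intro v hv
    rcases Finset.mem_union.mp hv with hvA | hvB
    · -- v ∈ A.erase x : v ≠ x, v ≠ y (y ∈ B, v ∈ A)
      obtain ⟨hvx, hvA'⟩ := Finset.mem_erase.mp hvA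
      have hvy : v ≠ y := by rintro rfl; exact hyA hvA'
      rw [fdeg_eq_ncard, neighborSet_deleteEdge_other hvx hvy, ← fdeg_eq_ncard,
        hD v (Finset.mem_union_left _ hvA'), Function.update_of_ne hvy]
    · rcases eq_or_ne v y with rfl | hvy
      · have : ({s(x,v)} : Set (Sym2 V)) = {s(v,x)} := by rw [Sym2.eq_swap]
        rw [fdeg_eq_ncard, this, neighborSet_deleteEdge_self,
          Set.ncard_diff_singleton_of_mem (show x ∈ T.neighborSet v from hxy.symm), ← fdeg_eq_ncard,
          hD v (Finset.mem_union_right _ hvB), Function.update_self]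
        omega
      · have hvx : v ≠ x := by rintro rfl; exact hxB hvB
        rw [fdeg_eq_ncard, neighborSet_deleteEdge_other hvx hvy, ← fdeg_eq_ncard,
          hD v (Finset.mem_union_right _ hvB), Function.update_of_ne hvy]
  · -- degree zero off support
    intro v hv
    rcases eq_or_ne v x with rfl | hvx
    · rw [fdeg_eq_zero_iff]
      intro w hw
      have hw' : T.Adj v w := T.deleteEdges_le _ hw
      have := huniq w hw'
      subst this
      rw [deleteEdges_adj] at hw
      exact hw.2 rfl
    · have hvy : v ≠ y := by
        rintro rfl
        exact hv (Finset.mem_union_right _ hyB)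
      have hv' : v ∉ A ∪ B := by
        intro hc
        rcases Finset.mem_union.mp hc with h | h
        · exact hv (Finset.mem_union_left _ (Finset.mem_erase.mpr ⟨hvx, h⟩))
        · exact hv (Finset.mem_union_right _ h)
      rw [fdeg_eq_ncard, neighborSet_deleteEdge_other hvx hvy, ← fdeg_eq_ncard]
      exact hD0 v hv'
lemma addE_delete {T : SimpleGraph V} {x y : V} (h : T.Adj x y) :
    addE (T.deleteEdges {s(x,y)}) x y = T := by
  ext a b
  rw [addE_adj (T.ne_of_adj h)]
  simp only [deleteEdges_adj, Set.mem_singleton_iff, Sym2.eq_iff]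
  constructor
  · rintro (⟨h1, -⟩ | ⟨rfl, rfl⟩ | ⟨rfl, rfl⟩)
    · exact h1
    · exact h
    · exact h.symm
  · intro hab
    by_cases hc : (a = x ∧ b = y) ∨ (a = y ∧ b = x)
    · tauto
    · exact Or.inl ⟨hab, fun hh => hc hh⟩

lemma delete_addE {T' : SimpleGraph V} {x y : V} (hxy : x ≠ y) (h : ¬ T'.Adj x y) :
    (addE T' x y).deleteEdges {s(x,y)} = T' := by
  ext a b
  simp only [deleteEdges_adj, addE_adj hxy, Set.mem_singleton_iff, Sym2.eq_iff]
  constructor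
  · rintro ⟨h1 | ⟨rfl, rfl⟩ | ⟨rfl, rfl⟩, h2⟩
    · exact h1
    · exact absurd (Or.inl ⟨rfl, rfl⟩) h2
    · exact absurd (Or.inr ⟨rfl, rfl⟩) h2
  · intro hab
    refine ⟨Or.inl hab, ?_⟩
    rintro (⟨rfl, rfl⟩ | ⟨rfl, rfl⟩)
    · exact h hab
    · exact h hab.symm

set_option maxHeartbeats 1000000 in
lemma bwd_mem [Finite V] {A B : Finset V} {k : V → ℕ} {x y : V}
    (hdisj : Disjoint A B) (hx : x ∈ A) (hkx : k x = 0)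
    (hyB : y ∈ B) (hky : 1 ≤ k y)
    {T' : SimpleGraph V} (hT' : T' ∈ Fib (A.erase x) B (Function.update k y (k y - 1))) :
    addE T' x y ∈ Fib A B k ∧ ¬ T'.Adj x y := by
  obtain ⟨hE, hAc, hR, hD, hD0⟩ := hT'
  have hxB : x ∉ B := Finset.disjoint_left.mp hdisj hx
  have hyA : y ∉ A := Finset.disjoint_right.mp hdisj hyB
  have hxyne : x ≠ y := fun hc => hxB (hc ▸ hyB)
  have hxs : x ∉ A.erase x ∪ B := by
    simp only [Finset.mem_union, Finset.mem_erase]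
    rintro (⟨hc, -⟩ | hc)
    · exact hc rfl
    · exact hxB hc
  have hx0 : ∀ w, ¬ T'.Adj x w := fdeg_eq_zero_iff.mp (hD0 x hxs)
  have hnadj : ¬ T'.Adj x y := hx0 y
  have hnbrx : ∀ w, (addE T' x y).Adj x w → w = y := by
    intro w hw
    rcases (addE_adj hxyne).mp hw with h | ⟨-, rfl⟩ | ⟨hc, -⟩
    · exact absurd h (hx0 w)
    · rfl
    · exact absurd hc hxyne
  refine ⟨⟨?_, ?_, ?_, ?_, ?_⟩, hnadj⟩
  · -- edge location
    intro a b hab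
    rcases (addE_adj hxyne).mp hab with h | ⟨rfl, rfl⟩ | ⟨rfl, rfl⟩
    · rcases hE a b h with ⟨h1, h2⟩ | ⟨h1, h2⟩
      · exact Or.inl ⟨Finset.mem_of_mem_erase h1, h2⟩
      · exact Or.inr ⟨h1, Finset.mem_of_mem_erase h2⟩
    · exact Or.inl ⟨hx, hyB⟩
    · exact Or.inr ⟨hyB, hx⟩
  · -- acyclicity
    intro v c hc
    by_cases hxc : x ∈ c.support
    · obtain ⟨a, b, hab, ha, hb⟩ := cycle_two_neighbors hc hxc
      exact hab ((hnbrx a ha).trans (hnbrx b hb).symm)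
    · have hcT' : ∀ e ∈ c.edges, e ∈ T'.edgeSet := by
        intro e he
        induction e with
        | h a b =>
          have hadj : (addE T' x y).Adj a b := c.adj_of_mem_edges he
          have hax : a ≠ x := by
            rintro rfl
            exact hxc (c.fst_mem_support_of_mem_edges he)
          have hbx : b ≠ x := by
            rintro rfl
            exact hxc (c.snd_mem_support_of_mem_edges he)
          rcases (addE_adj hxyne).mp hadj with h | ⟨rfl, rfl⟩ | ⟨rfl, rfl⟩
          · exact h
          · exact absurd rfl hax
          · exact absurd rfl hbx
      exact hAc (c.transfer T' hcT') (hc.transfer hcT')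
  · -- reachability
    have hle : T' ≤ addE T' x y := le_sup_left
    have reach_y : ∀ v ∈ A ∪ B, (addE T' x y).Reachable y v := by
      intro v hv
      rcases eq_or_ne v x with rfl | hvx
      · exact (SimpleGraph.Adj.reachable (by rw [addE_adj hxyne]; tauto)).symm
        |>.symm
      · have hv' : v ∈ A.erase x ∪ B := by
          rcases Finset.mem_union.mp hv with h | h
          · exact Finset.mem_union_left _ (Finset.mem_erase.mpr ⟨hvx, h⟩)
          · exact Finset.mem_union_right _ h
        exact (hR y (Finset.mem_union_right _ hyB) v hv').mono hle
    intro u hu v hv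
    exact ((reach_y u hu).symm).trans (reach_y v hv)
  · -- degrees
    intro v hv
    rcases eq_or_ne v x with rfl | hvx
    · have : (addE T' v y).neighborSet v = insert y (T'.neighborSet v) :=
        neighborSet_addE_self hxyne
      rw [fdeg_eq_ncard, this]
      have hyn : y ∉ T'.neighborSet v := hx0 y
      rw [Set.ncard_insert_of_notMem hyn (Set.toFinite _)]
      have : (T'.neighborSet v).ncard = 0 := by
        rw [← fdeg_eq_ncard]; exact hD0 v hxs
      rw [this, hkx]
    · rcases eq_or_ne v y with rfl | hvy
      · have : (addE T' x v).neighborSet v = insert x (T'.neighborSet v) := by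
          have h1 : addE T' x v = addE T' v x := by
            unfold addE
            rw [Sym2.eq_swap]
          rw [h1]
          exact neighborSet_addE_self (Ne.symm hxyne)
        rw [fdeg_eq_ncard, this, Set.ncard_insert_of_notMem
          (show x ∉ T'.neighborSet v from fun hc => hx0 v (T'.adj_symm hc))
          (Set.toFinite _), ← fdeg_eq_ncard,
          hD v (Finset.mem_union_right _ hyB), Function.update_self]
        omega
      · have hv' : v ∈ A.erase x ∪ B := by
          rcases Finset.mem_union.mp hv with h | h
          · exact Finset.mem_union_left _ (Finset.mem_erase.mpr ⟨hvx, h⟩)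
          · exact Finset.mem_union_right _ h
        rw [fdeg_eq_ncard, neighborSet_addE_other hxyne hvx hvy, ← fdeg_eq_ncard,
          hD v hv', Function.update_of_ne hvy]
  · -- degree zero off support
    intro v hv
    have hvx : v ≠ x := by rintro rfl; exact hv (Finset.mem_union_left _ hx)
    have hvy : v ≠ y := by rintro rfl; exact hv (Finset.mem_union_right _ hyB)
    have hv' : v ∉ A.erase x ∪ B := by
      intro hc
      rcases Finset.mem_union.mp hc with h | h
      · exact hv (Finset.mem_union_left _ (Finset.mem_of_mem_erase h))
      · exact hv (Finset.mem_union_right _ h)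
    rw [fdeg_eq_ncard, neighborSet_addE_other hxyne hvx hvy, ← fdeg_eq_ncard]
    exact hD0 v hv'
lemma nat_card_sigma {ι : Type*} [Fintype ι] (f : ι → Type*) [∀ i, Finite (f i)] :
    Nat.card (Σ i, f i) = ∑ i, Nat.card (f i) := by
  letI : ∀ i, Fintype (f i) := fun i => Fintype.ofFinite _
  simp only [Nat.card_eq_fintype_card, Fintype.card_sigma]

set_option maxHeartbeats 1000000 in
lemma step_card [Finite V] {A B : Finset V} {k : V → ℕ} {x : V}
    (hdisj : Disjoint A B) (hx : x ∈ A) (hkx : k x = 0) (hA2 : 2 ≤ A.card) :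
    Nat.card (Fib A B k) =
      ∑ y ∈ B.filter (fun y => 1 ≤ k y),
        Nat.card (Fib (A.erase x) B (Function.update k y (k y - 1))) := by
  classical
  set S := B.filter (fun y => 1 ≤ k y) with hS
  have hmemS : ∀ y, y ∈ S ↔ y ∈ B ∧ 1 ≤ k y := by
    intro y; simp [hS]
  -- the fiber family
  set Fb : V → Set (SimpleGraph V) :=
    fun y => Fib (A.erase x) B (Function.update k y (k y - 1)) with hFb
  have hchoose := fun T : ↥(Fib A B k) => fwd_mem hdisj hx hkx hA2 T.2
  choose yf hyB hky hadj huni hdel using hchoose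
  let F : ↥(Fib A B k) → Σ y : {y // y ∈ S}, ↥(Fb y) :=
    fun T => ⟨⟨yf T, (hmemS _).mpr ⟨hyB T, hky T⟩⟩,
      ⟨(T : SimpleGraph V).deleteEdges {s(x, yf T)}, hdel T⟩⟩
  -- component extraction is injective
  let G : (Σ y : {y // y ∈ S}, ↥(Fb y)) → V × SimpleGraph V :=
    fun p => (p.1.val, p.2.val)
  have hGinj : Function.Injective G := by
    rintro ⟨⟨y1, h1⟩, ⟨T1, hT1⟩⟩ ⟨⟨y2, h2⟩, ⟨T2, hT2⟩⟩ h
    simp only [G, Prod.mk.injEq] at h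
    obtain ⟨rfl, rfl⟩ := h
    rfl
  have hFbij : Function.Bijective F := by
    constructor
    · intro T1 T2 h
      have h1 : yf T1 = yf T2 := congrArg (fun p => (G p).1) h
      have h2 : (T1 : SimpleGraph V).deleteEdges {s(x, yf T1)}
          = (T2 : SimpleGraph V).deleteEdges {s(x, yf T2)} :=
        congrArg (fun p => (G p).2) h
      have e1 : (T1 : SimpleGraph V) = T2 := by
        rw [← addE_delete (hadj T1), ← addE_delete (hadj T2), h2, h1]
      exact Subtype.ext e1
    · rintro ⟨⟨y0, hy0⟩, ⟨T', hT'⟩⟩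
      obtain ⟨hy0B, hky0⟩ := (hmemS y0).mp hy0
      obtain ⟨hmem, hnadj⟩ := bwd_mem hdisj hx hkx hy0B hky0 hT'
      refine ⟨⟨addE T' x y0, hmem⟩, hGinj ?_⟩
      have hxyne : x ≠ y0 := by
        rintro rfl
        exact (Finset.disjoint_left.mp hdisj hx) hy0B
      have hyeq : yf ⟨addE T' x y0, hmem⟩ = y0 := by
        have : (addE T' x y0).Adj x y0 := by
          rw [addE_adj hxyne]; tauto
        exact (huni ⟨addE T' x y0, hmem⟩ y0 this).symm
      show G (F ⟨addE T' x y0, hmem⟩) = G ⟨⟨y0, hy0⟩, ⟨T', hT'⟩⟩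
      simp only [G, F]
      refine Prod.ext ?_ ?_
      · exact hyeq
      · show (addE T' x y0).deleteEdges {s(x, yf ⟨addE T' x y0, hmem⟩)} = T'
        rw [hyeq, delete_addE hxyne hnadj]
  have hcard : Nat.card (Fib A B k) = Nat.card (Σ y : {y // y ∈ S}, ↥(Fb y)) :=
    Nat.card_eq_of_bijective F hFbij
  rw [hcard]
  letI : ∀ y : {y // y ∈ S}, Finite ↥(Fb y.val) := by
    intro y
    exact (Fib_finite _ _ _).to_subtype
  rw [nat_card_sigma]
  exact Finset.sum_coe_sort S (fun y => Nat.card ↥(Fb y))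
def starG (x : V) (B : Finset V) (hx : x ∉ B) : SimpleGraph V where
  Adj a b := (a = x ∧ b ∈ B) ∨ (b = x ∧ a ∈ B)
  symm := by tauto
  loopless := ⟨by rintro a (⟨rfl, h⟩ | ⟨rfl, h⟩) <;> exact hx h⟩

set_option maxHeartbeats 1000000 in
lemma base_card [Finite V] {B : Finset V} {k : V → ℕ} {x : V}
    (hxB : x ∉ B) (hB : B.Nonempty) (hkx : k x = B.card - 1) (hkB : ∀ v ∈ B, k v = 0) :
    Nat.card (Fib {x} B k) = 1 := by
  classical
  have hset : Fib {x} B k = {starG x B hxB} := by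
    apply Set.eq_singleton_iff_unique_mem.mpr
    constructor
    · -- the star is in the fiber
      refine ⟨?_, ?_, ?_, ?_, ?_⟩
      · rintro a b (⟨rfl, h⟩ | ⟨rfl, h⟩)
        · exact Or.inl ⟨Finset.mem_singleton_self a, h⟩
        · exact Or.inr ⟨h, Finset.mem_singleton_self b⟩
      · intro v c hc
        cases c with
        | nil => exact hc.ne_nil rfl
        | cons h q =>
          rename_i w
          have hvw : v ≠ w := (starG x B hxB).ne_of_adj h
          obtain ⟨z, hz, hzx⟩ : ∃ z, z ∈ (Walk.cons h q).support ∧ z ≠ x := by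
            rcases eq_or_ne v x with rfl | hvx
            · exact ⟨w, by simp [Walk.support_cons, q.start_mem_support], fun hc' => hvw hc'.symm⟩
            · exact ⟨v, by simp [Walk.support_cons], hvx⟩
          obtain ⟨a, b, hab, ha, hb⟩ := cycle_two_neighbors hc hz
          have hax : a = x := by
            rcases ha with ⟨h1, -⟩ | ⟨h1, -⟩
            · exact absurd h1 hzx
            · exact h1
          have hbx : b = x := by
            rcases hb with ⟨h1, -⟩ | ⟨h1, -⟩
            · exact absurd h1 hzx
            · exact h1
          exact hab (hax.trans hbx.symm)
      · -- reachability
        have hxr : ∀ v ∈ {x} ∪ B, (starG x B hxB).Reachable x v := by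
          intro v hv
          rcases Finset.mem_union.mp hv with h | h
          · rw [Finset.mem_singleton.mp h]
          · exact SimpleGraph.Adj.reachable (Or.inl ⟨rfl, h⟩)
        intro u hu v hv
        exact (hxr u hu).symm.trans (hxr v hv)
      · -- degrees
        intro v hv
        rcases Finset.mem_union.mp hv with h | h
        · rw [Finset.mem_singleton.mp h]
          have : (starG x B hxB).neighborSet x = ↑B := by
            ext w
            simp only [mem_neighborSet, Finset.coe_sort_coe, Finset.mem_coe]
            constructor
            · rintro (⟨-, h1⟩ | ⟨rfl, h1⟩)
              · exact h1
              · exact absurd h1 hxB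
            · intro h1
              exact Or.inl ⟨rfl, h1⟩
          rw [fdeg_eq_ncard, this, Set.ncard_coe_finset, hkx]
          have := hB.card_pos
          omega
        · have hvx : v ≠ x := by rintro rfl; exact hxB h
          have : (starG x B hxB).neighborSet v = {x} := by
            ext w
            simp only [mem_neighborSet, Set.mem_singleton_iff]
            constructor
            · rintro (⟨h1, -⟩ | ⟨rfl, -⟩)
              · exact absurd h1 hvx
              · rfl
            · rintro rfl
              exact Or.inr ⟨rfl, h⟩
          rw [fdeg_eq_ncard, this, Set.ncard_singleton, hkB v h]
      · intro v hv
        have hvx : v ≠ x := by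
          rintro rfl; exact hv (Finset.mem_union_left _ (Finset.mem_singleton_self v))
        have hvB : v ∉ B := fun h => hv (Finset.mem_union_right _ h)
        rw [fdeg_eq_zero_iff]
        rintro w (⟨h1, -⟩ | ⟨-, h1⟩)
        · exact hvx h1
        · exact hvB h1
    · -- uniqueness
      rintro T ⟨hE, hAc, hR, hD, hD0⟩
      ext a b
      constructor
      · intro hab
        rcases hE a b hab with ⟨h1, h2⟩ | ⟨h1, h2⟩
        · exact Or.inl ⟨Finset.mem_singleton.mp h1, h2⟩
        · exact Or.inr ⟨Finset.mem_singleton.mp h2, h1⟩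
      · have key : ∀ b ∈ B, T.Adj x b := by
          intro v hv
          have hdv : fdeg T v = 1 := by
            rw [hD v (Finset.mem_union_right _ hv), hkB v hv]
          obtain ⟨y, hvy, -⟩ := fdeg_eq_one_iff.mp hdv
          have hyx : y = x := by
            rcases hE v y hvy with ⟨h1, -⟩ | ⟨-, h1⟩
            · exact absurd (Finset.mem_singleton.mp h1 ▸ hv) hxB
            · exact Finset.mem_singleton.mp h1
          exact (hyx ▸ hvy).symm
        rintro (⟨rfl, h⟩ | ⟨rfl, h⟩)
        · exact key b h
        · exact (key a h).symm
  rw [hset]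
  simp
lemma count_base [Finite V] {A B : Finset V} {k : V → ℕ}
    (hA1 : A.card = 1) (hB : B.Nonempty) (hdisj : Disjoint A B)
    (hkA : ∑ v ∈ A, k v = B.card - 1) (hkB : ∑ v ∈ B, k v = A.card - 1) :
    Nat.card (Fib A B k) * ((∏ v ∈ A, (k v).factorial) * ∏ v ∈ B, (k v).factorial)
      = (A.card - 1).factorial * (B.card - 1).factorial := by
  obtain ⟨x, rfl⟩ := Finset.card_eq_one.mp hA1
  have hxB : x ∉ B := Finset.disjoint_left.mp hdisj (Finset.mem_singleton_self x)
  have hkx : k x = B.card - 1 := by simpa using hkA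
  have hkB0 : ∀ v ∈ B, k v = 0 := by
    rw [hA1] at hkB
    simp only [Nat.sub_self] at hkB
    exact fun v hv => (Finset.sum_eq_zero_iff.mp hkB) v hv
  rw [base_card hxB hB hkx hkB0, hA1]
  simp only [Finset.prod_singleton, hkx, one_mul]
  have h2 : ∏ v ∈ B, (k v).factorial = 1 := Finset.prod_eq_one fun v hv => by
    rw [hkB0 v hv]; rfl
  rw [h2, mul_one]
  simp [Nat.factorial]

set_option maxHeartbeats 1000000 in
lemma count_step [Finite V] (N : ℕ)
    (IH : ∀ (A B : Finset V) (k : V → ℕ), A.card + B.card ≤ N → A.Nonempty → B.Nonempty →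
      Disjoint A B → ∑ v ∈ A, k v = B.card - 1 → ∑ v ∈ B, k v = A.card - 1 →
      Nat.card (Fib A B k) * ((∏ v ∈ A, (k v).factorial) * ∏ v ∈ B, (k v).factorial)
        = (A.card - 1).factorial * (B.card - 1).factorial)
    {A B : Finset V} {k : V → ℕ} {x : V}
    (hx : x ∈ A) (hkx : k x = 0) (hA2 : 2 ≤ A.card) (hB : B.Nonempty)
    (hN : A.card + B.card ≤ N + 1) (hdisj : Disjoint A B)
    (hkA : ∑ v ∈ A, k v = B.card - 1) (hkB : ∑ v ∈ B, k v = A.card - 1) :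
    Nat.card (Fib A B k) * ((∏ v ∈ A, (k v).factorial) * ∏ v ∈ B, (k v).factorial)
      = (A.card - 1).factorial * (B.card - 1).factorial := by
  classical
  rw [step_card hdisj hx hkx hA2, Finset.sum_mul]
  have hAe : (A.erase x).card = A.card - 1 := Finset.card_erase_of_mem hx
  have key : ∀ y ∈ B.filter (fun y => 1 ≤ k y),
      Nat.card (Fib (A.erase x) B (Function.update k y (k y - 1))) *
        ((∏ v ∈ A, (k v).factorial) * ∏ v ∈ B, (k v).factorial)
      = k y * ((A.card - 2).factorial * (B.card - 1).factorial) := by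
    intro y hy
    obtain ⟨hyB, hky⟩ := Finset.mem_filter.mp hy
    have hyA : y ∉ A.erase x := fun h =>
      (Finset.disjoint_left.mp hdisj (Finset.mem_of_mem_erase h)) hyB
    set k' := Function.update k y (k y - 1) with hk'
    have hprodA : ∏ v ∈ A.erase x, (k' v).factorial = ∏ v ∈ A, (k v).factorial := by
      have h1 : ∏ v ∈ A.erase x, (k' v).factorial = ∏ v ∈ A.erase x, (k v).factorial :=
        Finset.prod_congr rfl fun v hv => by
          rw [hk', Function.update_of_ne (fun hc => hyA (by rwa [← hc]))]
      rw [h1, ← Finset.mul_prod_erase A _ hx, hkx]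
      simp
    have hprodB : k y * ∏ v ∈ B, (k' v).factorial = ∏ v ∈ B, (k v).factorial := by
      rw [← Finset.mul_prod_erase B (fun v => (k' v).factorial) hyB,
        ← Finset.mul_prod_erase B (fun v => (k v).factorial) hyB]
      have h1 : ∏ v ∈ B.erase y, (k' v).factorial = ∏ v ∈ B.erase y, (k v).factorial :=
        Finset.prod_congr rfl fun v hv => by
          rw [hk', Function.update_of_ne (Finset.ne_of_mem_erase hv)]
      rw [h1, hk', Function.update_self, ← mul_assoc]
      congr 1
      obtain ⟨m, hm⟩ : ∃ m, k y = m + 1 := ⟨k y - 1, by omega⟩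
      rw [hm]
      simp [Nat.factorial_succ, mul_comm]
    have hsumA : ∑ v ∈ A.erase x, k' v = B.card - 1 := by
      have h1 : ∑ v ∈ A.erase x, k' v = ∑ v ∈ A.erase x, k v :=
        Finset.sum_congr rfl fun v hv => by
          rw [hk', Function.update_of_ne (fun hc => hyA (by rwa [← hc]))]
      rw [h1]
      have := Finset.add_sum_erase A k hx
      omega
    have hsumB : ∑ v ∈ B, k' v = (A.erase x).card - 1 := by
      have h1 : ∑ v ∈ B, k' v = (k y - 1) + ∑ v ∈ B.erase y, k v := by
        rw [← Finset.add_sum_erase B k' hyB]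
        congr 1
        · rw [hk', Function.update_self]
        · exact Finset.sum_congr rfl fun v hv => by
            rw [hk', Function.update_of_ne (Finset.ne_of_mem_erase hv)]
      have h2 := Finset.add_sum_erase B k hyB
      rw [h1, hAe]
      omega
    have hIH := IH (A.erase x) B k' (by omega)
      (Finset.card_pos.mp (by rw [hAe]; omega)) hB
      (Finset.disjoint_of_subset_left (Finset.erase_subset _ _) hdisj) hsumA hsumB
    rw [hAe] at hIH
    calc Nat.card (Fib (A.erase x) B k') * ((∏ v ∈ A, (k v).factorial) * ∏ v ∈ B, (k v).factorial)
        = k y * (Nat.card (Fib (A.erase x) B k') *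
            ((∏ v ∈ A.erase x, (k' v).factorial) * ∏ v ∈ B, (k' v).factorial)) := by
          rw [hprodA, ← hprodB]; ring
      _ = k y * ((A.card - 1 - 1).factorial * (B.card - 1).factorial) := by rw [hIH]
      _ = k y * ((A.card - 2).factorial * (B.card - 1).factorial) := by
          norm_num [Nat.sub_sub]
  rw [Finset.sum_congr rfl key]
  have hsum : ∑ y ∈ B.filter (fun y => 1 ≤ k y),
      k y * ((A.card - 2).factorial * (B.card - 1).factorial)
      = ∑ y ∈ B, k y * ((A.card - 2).factorial * (B.card - 1).factorial) := by
    apply Finset.sum_filter_of_ne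
    intro y _ h
    by_contra hc
    push_neg at hc
    have : k y = 0 := by omega
    rw [this] at h
    simp at h
  rw [hsum, ← Finset.sum_mul, hkB]
  obtain ⟨a, ha⟩ : ∃ a, A.card = a + 2 := ⟨A.card - 2, by omega⟩
  rw [ha]
  simp only [Nat.add_sub_cancel]
  have : a + 2 - 1 = a + 1 := by omega
  rw [this, Nat.factorial_succ, mul_assoc]
lemma count_main [Finite V] (N : ℕ) : ∀ (A B : Finset V) (k : V → ℕ),
    A.card + B.card ≤ N → A.Nonempty → B.Nonempty → Disjoint A B →
    ∑ v ∈ A, k v = B.card - 1 → ∑ v ∈ B, k v = A.card - 1 →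
    Nat.card (Fib A B k) * ((∏ v ∈ A, (k v).factorial) * ∏ v ∈ B, (k v).factorial)
      = (A.card - 1).factorial * (B.card - 1).factorial := by
  induction N with
  | zero =>
    intro A B k hN hA hB _ _ _
    have := hA.card_pos
    have := hB.card_pos
    omega
  | succ N ih =>
    intro A B k hN hA hB hdisj hkA hkB
    by_cases hA1 : A.card = 1
    · exact count_base hA1 hB hdisj hkA hkB
    by_cases hB1 : B.card = 1
    · have h := count_base (A := B) (B := A) hB1 hA hdisj.symm hkB hkA
      rw [Fib_comm A B k,
        mul_comm (∏ v ∈ A, (k v).factorial) (∏ v ∈ B, (k v).factorial), h, mul_comm]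
    have hA2 : 2 ≤ A.card := by have := hA.card_pos; omega
    have hB2 : 2 ≤ B.card := by have := hB.card_pos; omega
    by_cases hzero : ∃ x ∈ A, k x = 0
    · obtain ⟨x, hx, hkx⟩ := hzero
      exact count_step N ih hx hkx hA2 hB hN hdisj hkA hkB
    · push_neg at hzero
      have hy : ∃ y ∈ B, k y = 0 := by
        by_contra hc
        push_neg at hc
        have h1 : A.card ≤ ∑ v ∈ A, k v := by
          calc A.card = ∑ _v ∈ A, 1 := by simp
            _ ≤ ∑ v ∈ A, k v := Finset.sum_le_sum fun v hv => by
                have := hzero v hv; omega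
        have h2 : B.card ≤ ∑ v ∈ B, k v := by
          calc B.card = ∑ _v ∈ B, 1 := by simp
            _ ≤ ∑ v ∈ B, k v := Finset.sum_le_sum fun v hv => by
                have := hc v hv; omega
        omega
      obtain ⟨y, hyB, hky⟩ := hy
      have h := count_step N ih (A := B) (B := A) hyB hky hB2 hA (by omega)
        hdisj.symm hkB hkA
      rw [Fib_comm A B k,
        mul_comm (∏ v ∈ A, (k v).factorial) (∏ v ∈ B, (k v).factorial), h, mul_comm]
lemma fdeg_eq_degree [Fintype V] {T : SimpleGraph V} [DecidableRel T.Adj] (v : V) :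
    fdeg T v = T.degree v := by
  rw [fdeg_eq_ncard, SimpleGraph.degree, neighborFinset_def, Set.ncard_eq_toFinset_card']

lemma bipartite_deg_sum [Fintype V] {T : SimpleGraph V} [DecidableRel T.Adj]
    {A B : Finset V} (hdisj : Disjoint A B)
    (hE : ∀ a b, T.Adj a b → (a ∈ A ∧ b ∈ B) ∨ (a ∈ B ∧ b ∈ A)) :
    ∑ a ∈ A, T.degree a = T.edgeFinset.card := by
  classical
  have hAB : ∀ a b, a ∈ A → T.Adj a b → b ∈ B := by
    intro a b ha hab
    rcases hE a b hab with ⟨-, h⟩ | ⟨h, -⟩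
    · exact h
    · exact absurd h (Finset.disjoint_left.mp hdisj ha)
  have hdeg : ∑ a ∈ A, T.degree a = (A.sigma (fun a => T.neighborFinset a)).card := by
    rw [Finset.card_sigma]
    rfl
  rw [hdeg]
  apply Finset.card_bij (fun x _ => s(x.1, x.2))
  · rintro ⟨a, b⟩ hx
    rw [Finset.mem_sigma] at hx
    exact (SimpleGraph.mem_edgeFinset).mpr ((SimpleGraph.mem_neighborFinset _ _ _).mp hx.2)
  · rintro ⟨a, b⟩ ha ⟨c, d⟩ hc h
    rw [Finset.mem_sigma] at ha hc
    have hab : T.Adj a b := (SimpleGraph.mem_neighborFinset _ _ _).mp ha.2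
    have hcd : T.Adj c d := (SimpleGraph.mem_neighborFinset _ _ _).mp hc.2
    rw [Sym2.eq_iff] at h
    rcases h with ⟨rfl, rfl⟩ | ⟨rfl, rfl⟩
    · rfl
    · exact absurd (hAB _ _ hc.1 hcd) (Finset.disjoint_left.mp hdisj ha.1)
  · intro e he
    induction e with
    | h u v =>
      have huv : T.Adj u v := (SimpleGraph.mem_edgeSet _).mp ((SimpleGraph.mem_edgeFinset).mp he)
      rcases hE u v huv with ⟨h1, h2⟩ | ⟨h1, h2⟩
      · exact ⟨⟨u, v⟩, Finset.mem_sigma.mpr ⟨h1, (SimpleGraph.mem_neighborFinset _ _ _).mpr huv⟩, rfl⟩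
      · exact ⟨⟨v, u⟩, Finset.mem_sigma.mpr ⟨h2, (SimpleGraph.mem_neighborFinset _ _ _).mpr huv.symm⟩,
          Sym2.eq_swap⟩
set_option maxHeartbeats 2000000 in
theorem stmt_11 (m n : ℕ) (hm : 0 < m) (hn : 0 < n) :
    Nat.card {T : SimpleGraph (Fin m ⊕ Fin n) //
        T ≤ completeBipartiteGraph (Fin m) (Fin n) ∧ T.IsTree ∧
        ∀ v, Odd (Nat.card {w // T.Adj v w})} =
      ∑ k ∈ (Finset.Nat.antidiagonalTuple m (n - 1)).filter (fun k => ∀ i, Even (k i)),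
        ∑ l ∈ (Finset.Nat.antidiagonalTuple n (m - 1)).filter (fun l => ∀ j, Even (l j)),
          ((m - 1).factorial * (n - 1).factorial) /
            ((∏ i, (k i).factorial) * ∏ j, (l j).factorial) := by
  classical
  set A : Finset (Fin m ⊕ Fin n) := Finset.univ.map ⟨Sum.inl, Sum.inl_injective⟩ with hA
  set B : Finset (Fin m ⊕ Fin n) := Finset.univ.map ⟨Sum.inr, Sum.inr_injective⟩ with hB
  have hAcard : A.card = m := by simp [hA]
  have hBcard : B.card = n := by simp [hB]
  have hmemA : ∀ i : Fin m, Sum.inl i ∈ A := by intro i; simp [hA]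
  have hmemB : ∀ j : Fin n, Sum.inr j ∈ B := by intro j; simp [hB]
  have hdisj : Disjoint A B := by
    rw [Finset.disjoint_left]
    rintro (i | j) hv hv' <;> simp [hA, hB] at hv hv'
  have hunion : ∀ v : Fin m ⊕ Fin n, v ∈ A ∪ B := by
    rintro (i | j) <;> simp [hA, hB]
  have hcardV : Fintype.card (Fin m ⊕ Fin n) = m + n := by simp
  set P : SimpleGraph (Fin m ⊕ Fin n) → Prop := fun T =>
    T ≤ completeBipartiteGraph (Fin m) (Fin n) ∧ T.IsTree ∧
      ∀ v, Odd (Nat.card {w // T.Adj v w}) with hP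
  set F₁ := (Finset.Nat.antidiagonalTuple m (n - 1)).filter (fun k => ∀ i, Even (k i)) with hF₁
  set F₂ := (Finset.Nat.antidiagonalTuple n (m - 1)).filter (fun l => ∀ j, Even (l j)) with hF₂
  set dk : SimpleGraph (Fin m ⊕ Fin n) → (Fin m → ℕ) :=
    fun T i => fdeg T (Sum.inl i) - 1 with hdk
  set dl : SimpleGraph (Fin m ⊕ Fin n) → (Fin n → ℕ) :=
    fun T j => fdeg T (Sum.inr j) - 1 with hdl
  -- forward: a good tree lies in the fiber of its degree data
  have fwd : ∀ T : SimpleGraph (Fin m ⊕ Fin n), P T →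
      T ∈ Fib A B (Sum.elim (dk T) (dl T)) ∧ dk T ∈ F₁ ∧ dl T ∈ F₂ := by
    intro T hT
    obtain ⟨hle, htree, hodd⟩ := hT
    have hodd' : ∀ v, Odd (fdeg T v) := hodd
    have hloc : ∀ a b, T.Adj a b → (a ∈ A ∧ b ∈ B) ∨ (a ∈ B ∧ b ∈ A) := by
      intro a b hab
      rcases hle hab with ⟨h1, h2⟩ | ⟨h1, h2⟩
      · cases a with
        | inl i => cases b with
          | inl j => simp at h2
          | inr j => exact Or.inl ⟨hmemA i, hmemB j⟩
        | inr i => simp at h1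
      · cases a with
        | inl i => simp at h1
        | inr i => cases b with
          | inl j => exact Or.inr ⟨hmemB i, hmemA j⟩
          | inr j => simp at h2
    have hdegpos : ∀ v, 1 ≤ fdeg T v := by
      intro v
      obtain ⟨w, hw⟩ := Fintype.exists_ne_of_one_lt_card (by omega : 1 < Fintype.card (Fin m ⊕ Fin n)) v
      obtain ⟨p⟩ := htree.isConnected.preconnected v w
      cases p with
      | nil => exact absurd rfl hw.symm
      | cons h q =>
        rw [fdeg_eq_ncard]
        rw [Nat.succ_le_iff, Set.ncard_pos (Set.toFinite _)]
        exact ⟨_, h⟩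
    have hE : T.edgeFinset.card = m + n - 1 := by
      have := htree.card_edgeFinset
      rw [hcardV] at this
      omega
    have hsA : ∑ i : Fin m, fdeg T (Sum.inl i) = m + n - 1 := by
      have h1 := bipartite_deg_sum hdisj hloc
      rw [hA, Finset.sum_map] at h1
      rw [← hE, ← h1]
      exact Finset.sum_congr rfl fun i _ => fdeg_eq_degree _
    have hsB : ∑ j : Fin n, fdeg T (Sum.inr j) = m + n - 1 := by
      have h1 := bipartite_deg_sum hdisj.symm (fun a b hab => (hloc a b hab).symm)
      rw [hB, Finset.sum_map] at h1
      rw [← hE, ← h1]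
      exact Finset.sum_congr rfl fun j _ => fdeg_eq_degree _
    have hsumdk : ∑ i, dk T i = n - 1 := by
      have : ∑ i, (dk T i + 1) = ∑ i : Fin m, fdeg T (Sum.inl i) :=
        Finset.sum_congr rfl fun i _ => by
          have := hdegpos (Sum.inl i); simp only [hdk]; omega
      rw [Finset.sum_add_distrib, Finset.sum_const, Finset.card_univ] at this
      simp only [Fintype.card_fin, smul_eq_mul, mul_one] at this
      omega
    have hsumdl : ∑ j, dl T j = m - 1 := by
      have : ∑ j, (dl T j + 1) = ∑ j : Fin n, fdeg T (Sum.inr j) :=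
        Finset.sum_congr rfl fun j _ => by
          have := hdegpos (Sum.inr j); simp only [hdl]; omega
      rw [Finset.sum_add_distrib, Finset.sum_const, Finset.card_univ] at this
      simp only [Fintype.card_fin, smul_eq_mul, mul_one] at this
      omega
    refine ⟨⟨hloc, htree.IsAcyclic, fun u _ v _ => htree.isConnected.preconnected u v,
        ?_, ?_⟩, ?_, ?_⟩
    · rintro (i | j) _
      · have := hdegpos (Sum.inl i)
        simp only [Sum.elim_inl, hdk]
        omega
      · have := hdegpos (Sum.inr j)
        simp only [Sum.elim_inr, hdl]
        omega
    · intro v hv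
      exact absurd (hunion v) hv
    · rw [hF₁, Finset.mem_filter, Finset.Nat.mem_antidiagonalTuple]
      refine ⟨hsumdk, fun i => ?_⟩
      obtain ⟨c, hc⟩ := hodd' (Sum.inl i)
      exact ⟨c, by simp only [hdk]; omega⟩
    · rw [hF₂, Finset.mem_filter, Finset.Nat.mem_antidiagonalTuple]
      refine ⟨hsumdl, fun j => ?_⟩
      obtain ⟨c, hc⟩ := hodd' (Sum.inr j)
      exact ⟨c, by simp only [hdl]; omega⟩
  -- backward: a fiber member is a good tree with matching degree data
  have bwd : ∀ (k : Fin m → ℕ) (l : Fin n → ℕ), k ∈ F₁ → l ∈ F₂ →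
      ∀ T ∈ Fib A B (Sum.elim k l), P T ∧ dk T = k ∧ dl T = l := by
    intro k l hk hl T hT
    obtain ⟨hloc, hAc, hR, hD, -⟩ := hT
    obtain ⟨-, hkev⟩ := Finset.mem_filter.mp hk
    obtain ⟨-, hlev⟩ := Finset.mem_filter.mp hl
    have hdeg : ∀ v, fdeg T v = Sum.elim k l v + 1 := fun v => hD v (hunion v)
    have hconn : T.Connected := by
      haveI : Nonempty (Fin m ⊕ Fin n) := ⟨Sum.inl ⟨0, hm⟩⟩
      exact SimpleGraph.Connected.mk (fun u v => hR u (hunion u) v (hunion v))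
    refine ⟨⟨?_, ⟨hconn, hAc⟩, ?_⟩, ?_, ?_⟩
    · intro a b hab
      rcases hloc a b hab with ⟨h1, h2⟩ | ⟨h1, h2⟩
      · cases a with
        | inl i => cases b with
          | inl j => exact absurd h2 (by rw [Finset.disjoint_left] at hdisj; exact hdisj (hmemA j))
          | inr j => exact Or.inl ⟨rfl, rfl⟩
        | inr i => exact absurd h1 (by rw [Finset.disjoint_right] at hdisj; exact hdisj (hmemB i))
      · cases a with
        | inl i => exact absurd h1 (by rw [Finset.disjoint_left] at hdisj; exact hdisj (hmemA i))
        | inr i => cases b with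
          | inl j => exact Or.inr ⟨rfl, rfl⟩
          | inr j => exact absurd h2 (by rw [Finset.disjoint_right] at hdisj; exact hdisj (hmemB j))
    · rintro (i | j)
      · show Odd (fdeg T (Sum.inl i))
        rw [hdeg (Sum.inl i)]
        simp only [Sum.elim_inl]
        obtain ⟨c, hc⟩ := hkev i
        exact ⟨c, by omega⟩
      · show Odd (fdeg T (Sum.inr j))
        rw [hdeg (Sum.inr j)]
        simp only [Sum.elim_inr]
        obtain ⟨c, hc⟩ := hlev j
        exact ⟨c, by omega⟩
    · funext i
      rw [hdk]
      show fdeg T (Sum.inl i) - 1 = k i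
      rw [hdeg (Sum.inl i)]
      simp
    · funext j
      rw [hdl]
      show fdeg T (Sum.inr j) - 1 = l j
      rw [hdeg (Sum.inr j)]
      simp
  -- the bijection
  let Fb : (Fin m → ℕ) × (Fin n → ℕ) → Set (SimpleGraph (Fin m ⊕ Fin n)) :=
    fun p => Fib A B (Sum.elim p.1 p.2)
  let F : {T : SimpleGraph (Fin m ⊕ Fin n) // P T} →
      Σ p : {p // p ∈ F₁ ×ˢ F₂}, ↥(Fb p.val) :=
    fun T => ⟨⟨(dk T.val, dl T.val),
      Finset.mem_product.mpr ⟨(fwd T.val T.2).2.1, (fwd T.val T.2).2.2⟩⟩,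
      ⟨T.val, (fwd T.val T.2).1⟩⟩
  have hFbij : Function.Bijective F := by
    constructor
    · intro T1 T2 h
      have : T1.val = T2.val := congrArg (fun q => q.2.val) h
      exact Subtype.ext this
    · rintro ⟨⟨⟨k, l⟩, hkl⟩, ⟨T, hT⟩⟩
      obtain ⟨hk, hl⟩ := Finset.mem_product.mp hkl
      obtain ⟨hPT, hdkT, hdlT⟩ := bwd k l hk hl T hT
      refine ⟨⟨T, hPT⟩, ?_⟩
      have h1 : (dk T, dl T) = (k, l) := by rw [hdkT, hdlT]
      simp only [F]
      congr 1
      · exact Subtype.ext h1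
      · rw [Subtype.heq_iff_coe_eq]
        intro x
        rw [h1]
  have hdecomp : Nat.card {T : SimpleGraph (Fin m ⊕ Fin n) // P T} =
      ∑ p ∈ F₁ ×ˢ F₂, Nat.card (Fib A B (Sum.elim p.1 p.2)) := by
    rw [Nat.card_eq_of_bijective F hFbij]
    letI : ∀ p : {p // p ∈ F₁ ×ˢ F₂}, Finite ↥(Fb p.val) := by
      intro p
      exact (Fib_finite _ _ _).to_subtype
    rw [nat_card_sigma]
    exact Finset.sum_coe_sort (F₁ ×ˢ F₂) (fun p => Nat.card ↥(Fb p))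
  show Nat.card {T : SimpleGraph (Fin m ⊕ Fin n) // P T} = _
  rw [hdecomp, Finset.sum_product]
  refine Finset.sum_congr rfl fun k hk => Finset.sum_congr rfl fun l hl => ?_
  -- per-fiber count
  have hsumk : ∑ v ∈ A, Sum.elim k l v = B.card - 1 := by
    rw [hA, Finset.sum_map, hBcard]
    have := (Finset.Nat.mem_antidiagonalTuple).mp (Finset.mem_filter.mp hk).1
    simpa using this
  have hsuml : ∑ v ∈ B, Sum.elim k l v = A.card - 1 := by
    rw [hB, Finset.sum_map, hAcard]
    have := (Finset.Nat.mem_antidiagonalTuple).mp (Finset.mem_filter.mp hl).1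
    simpa using this
  have hcount := count_main (A.card + B.card) A B (Sum.elim k l) le_rfl
    ⟨Sum.inl ⟨0, hm⟩, hmemA _⟩ ⟨Sum.inr ⟨0, hn⟩, hmemB _⟩ hdisj hsumk hsuml
  have hprodA : ∏ v ∈ A, (Sum.elim k l v).factorial = ∏ i, (k i).factorial := by
    rw [hA, Finset.prod_map]; rfl
  have hprodB : ∏ v ∈ B, (Sum.elim k l v).factorial = ∏ j, (l j).factorial := by
    rw [hB, Finset.prod_map]; rfl
  rw [hprodA, hprodB, hAcard, hBcard] at hcount
  have hpos : 0 < (∏ i, (k i).factorial) * ∏ j, (l j).factorial :=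
    Nat.mul_pos (Finset.prod_pos fun i _ => Nat.factorial_pos _)
      (Finset.prod_pos fun j _ => Nat.factorial_pos _)
  exact (Nat.div_eq_of_eq_mul_left hpos hcount.symm).symm
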